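/- Let X be a convex set, and for j = 1,...,J let n_j : X → ℝ be convex and nonnegative and d_j : X → ℝ be concave and positive. Let x̄ ∈ X, ρ > 0, and suppose x̂ ∈ X satisfies max_{1≤j≤J} (1/d_j(x̄)) [ n_j(x̂) − n_j(x̄) − (n_j(x̄)/d_j(x̄)) (d_j(x̂) − d_j(x̄)) ] + (ρ/2)‖x̂ − x̄‖² ≤ 0. Then max_{1≤j≤J} n_j(x̂)/d_j(x̂) ≤ max_{1≤j≤J} n_j(x̄)/d_j(x̄) − (ρ/2)‖x̂ − x̄‖² · min_{1≤j≤J} d_j(x̄)/d_j(x̂). -/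
import Mathlib


theorem stmt16 {m J : ℕ} (hJ : 0 < J)
    (X : Set (EuclideanSpace ℝ (Fin m))) (hX : Convex ℝ X)
    (nn dd : Fin J → EuclideanSpace ℝ (Fin m) → ℝ)
    (hn : ∀ j, ConvexOn ℝ X (nn j)) (hn0 : ∀ j, ∀ x ∈ X, 0 ≤ nn j x)
    (hd : ∀ j, ConcaveOn ℝ X (dd j)) (hd0 : ∀ j, ∀ x ∈ X, 0 < dd j x)
    (x₀ xhat : EuclideanSpace ℝ (Fin m)) (hx₀ : x₀ ∈ X) (hxhat : xhat ∈ X)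
    (ρ : ℝ) (hρ : 0 < ρ)
    (hineq :
      (Finset.univ.sup' (Finset.univ_nonempty_iff.mpr ⟨⟨0, hJ⟩⟩)
        (fun j => (1 / dd j x₀) *
          (nn j xhat - nn j x₀ - (nn j x₀ / dd j x₀) * (dd j xhat - dd j x₀))))
        + ρ / 2 * ‖xhat - x₀‖ ^ 2 ≤ 0) :
    Finset.univ.sup' (Finset.univ_nonempty_iff.mpr ⟨⟨0, hJ⟩⟩)
        (fun j => nn j xhat / dd j xhat)
      ≤ Finset.univ.sup' (Finset.univ_nonempty_iff.mpr ⟨⟨0, hJ⟩⟩)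
          (fun j => nn j x₀ / dd j x₀)
        - ρ / 2 * ‖xhat - x₀‖ ^ 2 *
          Finset.univ.inf' (Finset.univ_nonempty_iff.mpr ⟨⟨0, hJ⟩⟩)
            (fun j => dd j x₀ / dd j xhat) := by
  set c := ρ / 2 * ‖xhat - x₀‖ ^ 2 with hc_def
  have hc : 0 ≤ c := by positivity
  apply Finset.sup'_le
  intro j _
  have hd0j := hd0 j x₀ hx₀
  have hdhj := hd0 j xhat hxhat
  have h1 : (1 / dd j x₀) *
      (nn j xhat - nn j x₀ - (nn j x₀ / dd j x₀) * (dd j xhat - dd j x₀)) ≤ -c := by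
    have := Finset.le_sup' (f := fun j => (1 / dd j x₀) *
      (nn j xhat - nn j x₀ - (nn j x₀ / dd j x₀) * (dd j xhat - dd j x₀)))
      (Finset.mem_univ j)
    linarith [this.trans (by linarith : Finset.univ.sup' (Finset.univ_nonempty_iff.mpr ⟨⟨0, hJ⟩⟩)
      (fun j => (1 / dd j x₀) *
        (nn j xhat - nn j x₀ - (nn j x₀ / dd j x₀) * (dd j xhat - dd j x₀))) ≤ -c)]
  have key : (1 / dd j x₀) *
      (nn j xhat - nn j x₀ - (nn j x₀ / dd j x₀) * (dd j xhat - dd j x₀)) *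
      (dd j x₀ / dd j xhat) = nn j xhat / dd j xhat - nn j x₀ / dd j x₀ := by
    field_simp
    ring
  have h2 : nn j xhat / dd j xhat - nn j x₀ / dd j x₀ ≤ -c * (dd j x₀ / dd j xhat) := by
    rw [← key]
    exact mul_le_mul_of_nonneg_right h1 (le_of_lt (div_pos hd0j hdhj))
  have h3 : Finset.univ.inf' (Finset.univ_nonempty_iff.mpr ⟨⟨0, hJ⟩⟩)
      (fun j => dd j x₀ / dd j xhat) ≤ dd j x₀ / dd j xhat :=
    Finset.inf'_le _ (Finset.mem_univ j)
  have h4 : -c * (dd j x₀ / dd j xhat) ≤ -c * Finset.univ.inf'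
      (Finset.univ_nonempty_iff.mpr ⟨⟨0, hJ⟩⟩) (fun j => dd j x₀ / dd j xhat) :=
    mul_le_mul_of_nonpos_left h3 (by linarith)
  have h5 : nn j x₀ / dd j x₀ ≤ Finset.univ.sup'
      (Finset.univ_nonempty_iff.mpr ⟨⟨0, hJ⟩⟩) (fun j => nn j x₀ / dd j x₀) :=
    Finset.le_sup' (f := fun j => nn j x₀ / dd j x₀) (Finset.mem_univ j)
  linarith
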